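/- All pairs of distinct positive rational numbers (x, y) satisfying x^x = y^y are given by x = (m/(m+1))^m, y = (m/(m+1))^{m+1} for some positive integer m, up to swapping x and y. -/

import Mathlib

lemma pow_gap (u v : ℕ) (hu : 1 ≤ u) (huv : u < v) :
    ∀ n, 2 ≤ n → u ^ n + n < v ^ n := by
  intro n hn
  induction n with
  | zero => omega
  | succ m ih =>
    rcases Nat.lt_or_ge m 2 with hm | hm
    · interval_cases m
      · omega
      · show u ^ 2 + 2 < v ^ 2
        have h2 : (u+1)^2 ≤ v^2 := Nat.pow_le_pow_left (by omega) 2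
        nlinarith
    · have h1 := ih hm
      have hum : 1 ≤ u ^ m := Nat.one_le_pow _ _ (by omega)
      calc u ^ (m+1) + (m+1) ≤ u * u ^ m + u * m + u := by
            have e : u ^ (m+1) = u * u ^ m := by ring
            nlinarith
        _ = u * (u ^ m + m + 1) := by ring
        _ ≤ u * (v ^ m) := Nat.mul_le_mul_left u (by omega)
        _ < v * v ^ m := (Nat.mul_lt_mul_right (pow_pos (by omega : 0 < v) m)).2 huv
        _ = v ^ (m+1) := by ring

lemma main_lemma (x y : ℚ) (hx : 0 < x) (hy : 0 < y) (hlt : y < x)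
    (h : (x : ℝ) ^ (x : ℝ) = (y : ℝ) ^ (y : ℝ)) :
    ∃ m : ℕ, 0 < m ∧ x = ((m : ℚ) / (m + 1)) ^ m ∧ y = ((m : ℚ) / (m + 1)) ^ (m + 1) := by
  set k : ℚ := x / y with hkdef
  have hk1 : 1 < k := (one_lt_div hy).2 hlt
  have hk0 : 0 < k := lt_trans one_pos hk1
  have hknum : 0 < k.num := Rat.num_pos.2 hk0
  set p : ℕ := k.num.toNat with hpdef
  set q : ℕ := k.den with hqdef
  have hq0 : 0 < q := k.pos
  have hpcast : (p : ℤ) = k.num := Int.toNat_of_nonneg hknum.le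
  have hkpq : (k : ℚ) = (p : ℚ) / (q : ℚ) := by
    rw [← Rat.num_div_den k]
    congr 1
    · exact_mod_cast hpcast.symm
  have hqp : q < p := by
    have h1 : (1:ℚ) < (p:ℚ)/(q:ℚ) := by rwa [hkpq] at hk1
    have hq0' : (0:ℚ) < (q:ℚ) := by exact_mod_cast hq0
    have := (one_lt_div hq0').1 h1
    exact_mod_cast this
  have hp0 : 0 < p := lt_trans hq0 hqp
  have hcop : Nat.Coprime p q := by
    have := k.reduced
    rwa [show p = k.num.natAbs from by omega] 
  -- analysis step
  have hQ : y ^ (p - q) = ((q : ℚ) / (p : ℚ)) ^ p := by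
    have hxR : (0:ℝ) < (x:ℝ) := by exact_mod_cast hx
    have hyR : (0:ℝ) < (y:ℝ) := by exact_mod_cast hy
    have hkR : (0:ℝ) < (k:ℝ) := by exact_mod_cast hk0
    have hpR : (0:ℝ) < (p:ℝ) := by exact_mod_cast hp0
    have hqR : (0:ℝ) < (q:ℝ) := by exact_mod_cast hq0
    have hlog : (x:ℝ) * Real.log x = (y:ℝ) * Real.log y := by
      have := congrArg Real.log h
      rwa [Real.log_rpow hxR, Real.log_rpow hyR] at this
    have hxky : x = k * y := by rw [hkdef, div_mul_cancel₀ x (ne_of_gt hy)]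
    have hxkyR : (x:ℝ) = (k:ℝ) * (y:ℝ) := by exact_mod_cast hxky
    rw [hxkyR, Real.log_mul (ne_of_gt hkR) (ne_of_gt hyR)] at hlog
    have hcancel : (k:ℝ) * (Real.log k + Real.log y) = Real.log y := by
      apply mul_right_cancel₀ (ne_of_gt hyR)
      linear_combination hlog
    have hqk : ((q:ℚ)) * k = (p:ℚ) := by
      rw [hkpq]; field_simp
    have hqkR : (q:ℝ) * (k:ℝ) = (p:ℝ) := by exact_mod_cast hqk
    have h2 : (p:ℝ) * (Real.log k + Real.log y) = (q:ℝ) * Real.log y := by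
      rw [← hqkR]; linear_combination (q:ℝ) * hcancel
    have hkR' : (k:ℝ) = (p:ℝ)/(q:ℝ) := by rw [hkpq]; push_cast; ring
    have hlogk : Real.log k = Real.log p - Real.log q := by
      rw [hkR', Real.log_div (ne_of_gt hpR) (ne_of_gt hqR)]
    have hlogqp : Real.log ((q:ℝ)/(p:ℝ)) = Real.log q - Real.log p :=
      Real.log_div (ne_of_gt hqR) (ne_of_gt hpR)
    have h3 : ((p:ℝ) - (q:ℝ)) * Real.log y = (p:ℝ) * Real.log ((q:ℝ)/(p:ℝ)) := by
      rw [hlogqp]; linear_combination h2 - (p:ℝ) * hlogk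
    have h4 : Real.log ((y:ℝ)^(p-q)) = Real.log (((q:ℝ)/(p:ℝ))^p) := by
      rw [Real.log_pow, Real.log_pow]
      rw [Nat.cast_sub hqp.le]
      exact h3
    have h5 : (y:ℝ)^(p-q) = ((q:ℝ)/(p:ℝ))^p := by
      have := congrArg Real.exp h4
      rwa [Real.exp_log (by positivity), Real.exp_log (by positivity)] at this
    have h6 : ((y ^ (p-q) : ℚ) : ℝ) = ((((q:ℚ)/(p:ℚ))^p : ℚ) : ℝ) := by push_cast; exact h5
    exact_mod_cast h6
  -- number theory step
  set n : ℕ := p - q with hndef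
  have hn0 : 0 < n := by omega
  have hbez : ∃ c d : ℤ, c * n + d * p = 1 := by
    obtain ⟨a, b, hab⟩ := Nat.isCoprime_iff_coprime.mpr hcop
    refine ⟨-b, a + b, ?_⟩
    have hnz : (n:ℤ) = (p:ℤ) - (q:ℤ) := by
      have : (q:ℤ) ≤ p := by exact_mod_cast hqp.le
      push_cast [hndef, Nat.cast_sub hqp.le]; ring
    rw [hnz]; linear_combination hab
  obtain ⟨c, d, hcd⟩ := hbez
  set w : ℚ := (q:ℚ)/(p:ℚ) with hwdef
  have hw0 : 0 < w := by
    have h1 : (0:ℚ) < (q:ℚ) := by exact_mod_cast hq0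
    have h2 : (0:ℚ) < (p:ℚ) := by exact_mod_cast hp0
    positivity
  have hwne : w ≠ 0 := ne_of_gt hw0
  have hyne : y ≠ 0 := ne_of_gt hy
  set s : ℚ := w ^ c * y ^ d with hsdef
  have hs0 : 0 < s := by positivity
  have hsn' : s ^ n = w := by
    have h1 : s ^ (n:ℤ) = w ^ (c * n) * y ^ (d * n) := by
      rw [hsdef, mul_zpow, ← zpow_mul, ← zpow_mul]
    have h2 : y ^ ((n:ℤ)) = w ^ ((p:ℤ)) := by
      rw [zpow_natCast, zpow_natCast, hQ]
    have h3 : y ^ (d * n) = w ^ (p * d) := by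
      rw [mul_comm d n, zpow_mul, h2, ← zpow_mul, mul_comm]
    have h4 : s ^ (n:ℤ) = w ^ (c * n + p * d) := by
      rw [h1, h3, zpow_add₀ hwne]
    have h5 : c * (n:ℤ) + (p:ℤ) * d = 1 := by linarith [hcd]
    rw [← zpow_natCast s n, h4, h5, zpow_one]
  set u : ℕ := s.num.toNat with hudef
  set v : ℕ := s.den with hvdef
  have hsnum : 0 < s.num := Rat.num_pos.2 hs0
  have hu0 : 0 < u := by omega
  have hv0 : 0 < v := s.pos
  have hucast : ((u:ℤ)) = s.num := Int.toNat_of_nonneg hsnum.le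
  have hcopuv : Nat.Coprime u v := by
    have := s.reduced
    rwa [show u = s.num.natAbs from by omega]
  have hsuv : s = (u:ℚ)/(v:ℚ) := by
    rw [← Rat.num_div_den s]
    congr 1
    exact_mod_cast hucast.symm
  have hkey : u ^ n * p = q * v ^ n := by
    have h1 : ((u:ℚ)/(v:ℚ)) ^ n = (q:ℚ)/(p:ℚ) := by rw [← hsuv, hsn']
    have hvne : ((v:ℚ)) ≠ 0 := by positivity
    have hpne : ((p:ℚ)) ≠ 0 := by positivity
    have h2 : (u:ℚ) ^ n * (p:ℚ) = (q:ℚ) * (v:ℚ) ^ n := by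
      rw [div_pow, div_eq_div_iff (pow_ne_zero _ hvne) hpne] at h1
      linear_combination h1
    exact_mod_cast h2
  have hdvd1 : p ∣ v ^ n := by
    have h1 : p ∣ q * v ^ n := ⟨u ^ n, by linarith [hkey]⟩
    exact (Nat.Coprime.dvd_of_dvd_mul_left hcop h1)
  have hdvd2 : v ^ n ∣ p := by
    have h1 : v ^ n ∣ u ^ n * p := ⟨q, by linarith [hkey]⟩
    exact (Nat.Coprime.dvd_of_dvd_mul_left ((hcopuv.symm).pow n n) h1)
  have hpv : p = v ^ n := Nat.dvd_antisymm hdvd1 hdvd2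
  have hqu : q = u ^ n := by
    have : u ^ n * p = q * p := by rw [hkey, hpv]
    have := Nat.eq_of_mul_eq_mul_right hp0 this
    omega
  have huv : u < v := by
    have h1 : u ^ n < v ^ n := by omega
    exact lt_of_pow_lt_pow_left₀ n (Nat.zero_le v) h1
  have hn1 : n = 1 := by
    by_contra hne
    have h2n : 2 ≤ n := by omega
    have := pow_gap u v hu0 huv n h2n
    omega
  have hpq1 : p = q + 1 := by omega
  refine ⟨q, hq0, ?_, ?_⟩
  · have hxky : x = k * y := by rw [hkdef, div_mul_cancel₀ x (ne_of_gt hy)]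
    have hyval : y = w ^ p := by
      have : y ^ n = w ^ p := hQ
      rwa [hn1, pow_one] at this
    have hqQ : ((q:ℚ)) ≠ 0 := by positivity
    have hq1Q : ((q:ℚ)) + 1 ≠ 0 := by positivity
    have hpcastQ : ((p:ℚ)) = (q:ℚ) + 1 := by rw [hpq1]; push_cast; ring
    rw [hxky, hkpq, hyval, hwdef, hpcastQ, hpq1, pow_succ]
    field_simp
  · have hyval : y = w ^ p := by
      have : y ^ n = w ^ p := hQ
      rwa [hn1, pow_one] at this
    have hpcastQ : ((p:ℚ)) = (q:ℚ) + 1 := by rw [hpq1]; push_cast; ring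
    rw [hyval, hwdef, hpcastQ, hpq1]

theorem stmt_16 (x y : ℚ) (hx : 0 < x) (hy : 0 < y) (hxy : x ≠ y)
    (h : (x : ℝ) ^ (x : ℝ) = (y : ℝ) ^ (y : ℝ)) :
    ∃ m : ℕ, 0 < m ∧
      ((x = ((m : ℚ) / (m + 1)) ^ m ∧ y = ((m : ℚ) / (m + 1)) ^ (m + 1)) ∨
       (y = ((m : ℚ) / (m + 1)) ^ m ∧ x = ((m : ℚ) / (m + 1)) ^ (m + 1))) := by
  rcases lt_or_gt_of_ne hxy with hlt | hlt
  · obtain ⟨m, hm, h1, h2⟩ := main_lemma y x hy hx hlt h.symm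
    exact ⟨m, hm, Or.inr ⟨h1, h2⟩⟩
  · obtain ⟨m, hm, h1, h2⟩ := main_lemma x y hx hy hlt h
    exact ⟨m, hm, Or.inl ⟨h1, h2⟩⟩
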